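/- Let Pi in R^2 be a lattice parallelogram of area 1 (i.e. Pi = v + {s u_1 + t u_2 : 0 <= s,t <= 1} where u_1, u_2 in Z^2 have determinant +-1 and v in Z^2). Then there is a lattice translate of Pi having a vertex at the origin such that the translate is contained in the closed first quadrant {x >= 0, y >= 0} or in the closed second quadrant {x <= 0, y >= 0}. -/
import Mathlib


open scoped BigOperators

/-- Width of a set `P ⊆ ℝ^d` in direction `h`. -/
noncomputable def width {d : ℕ} (P : Set (Fin d → ℝ)) (h : Fin d → ℝ) : ℝ :=
  sSup ((fun x => ∑ i, h i * x i) '' P) - sInf ((fun x => ∑ i, h i * x i) '' P)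

/-- Cast an integer vector to a real vector. -/
def zcast {d : ℕ} (h : Fin d → ℤ) : Fin d → ℝ := fun i => (h i : ℝ)

/-- A lattice polytope: the convex hull of a nonempty finite set of integer points. -/
def IsLatticePolytope {d : ℕ} (P : Set (Fin d → ℝ)) : Prop :=
  ∃ V : Finset (Fin d → ℝ), V.Nonempty ∧ (∀ v ∈ V, ∀ i, ∃ n : ℤ, v i = (n : ℝ)) ∧
    P = convexHull ℝ (V : Set (Fin d → ℝ))

/-- `l₁` of a subset of `ℝ³`. -/
noncomputable def lone3 (P : Set (Fin 3 → ℝ)) : ℝ :=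
  sSup ((fun x => x 0 + x 1 + x 2) '' P) - sInf ((fun x => x 0) '' P) -
    sInf ((fun x => x 1) '' P) - sInf ((fun x => x 2) '' P)

/-- `l₁` of a subset of `ℝ²`. -/
noncomputable def lone2 (P : Set (Fin 2 → ℝ)) : ℝ :=
  sSup ((fun x => x 0 + x 1) '' P) - sInf ((fun x => x 0) '' P) - sInf ((fun x => x 1) '' P)

/-- Lattice size of a subset of `ℝ³` with respect to the standard simplex. -/
noncomputable def lsDelta3 (P : Set (Fin 3 → ℝ)) : ℝ :=
  sInf {r : ℝ | ∃ A : Matrix (Fin 3) (Fin 3) ℤ, IsUnit A.det ∧ ∃ v : Fin 3 → ℤ,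
    r = lone3 ((fun x => Matrix.mulVec (A.map (Int.cast : ℤ → ℝ)) x + zcast v) '' P)}

/-- Lattice size of a subset of `ℝ²` with respect to the standard simplex. -/
noncomputable def lsDelta2 (P : Set (Fin 2 → ℝ)) : ℝ :=
  sInf {r : ℝ | ∃ A : Matrix (Fin 2) (Fin 2) ℤ, IsUnit A.det ∧ ∃ v : Fin 2 → ℤ,
    r = lone2 ((fun x => Matrix.mulVec (A.map (Int.cast : ℤ → ℝ)) x + zcast v) '' P)}

lemma signs_choice (a0 a1 b0 b1 : ℤ) (hd : a0*b1 - a1*b0 = 1 ∨ a0*b1 - a1*b0 = -1) :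
    ∃ e1 e2 : ℤ, (e1 = 1 ∨ e1 = -1) ∧ (e2 = 1 ∨ e2 = -1) ∧ 0 ≤ e1*a1 ∧ 0 ≤ e2*b1 ∧
      ((0 ≤ e1*a0 ∧ 0 ≤ e2*b0) ∨ (e1*a0 ≤ 0 ∧ e2*b0 ≤ 0)) := by
  obtain ⟨f1, hf1, hA1⟩ : ∃ f1 : ℤ, (f1 = 1 ∨ f1 = -1) ∧ 0 ≤ f1 * a1 := by
    rcases le_or_gt 0 a1 with h|h
    · exact ⟨1, Or.inl rfl, by omega⟩
    · exact ⟨-1, Or.inr rfl, by omega⟩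
  obtain ⟨f2, hf2, hB1⟩ : ∃ f2 : ℤ, (f2 = 1 ∨ f2 = -1) ∧ 0 ≤ f2 * b1 := by
    rcases le_or_gt 0 b1 with h|h
    · exact ⟨1, Or.inl rfl, by omega⟩
    · exact ⟨-1, Or.inr rfl, by omega⟩
  have hD : f1*a0*(f2*b1) - f1*a1*(f2*b0) = 1 ∨ f1*a0*(f2*b1) - f1*a1*(f2*b0) = -1 := by
    rcases hf1 with rfl|rfl <;> rcases hf2 with rfl|rfl <;> rcases hd with h|h <;>
      first
        | (left; linear_combination h)
        | (right; linear_combination h)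
        | (left; linear_combination -h)
        | (right; linear_combination -h)
  rcases le_or_gt 0 (f1*a0) with hA0|hA0 <;> rcases le_or_gt 0 (f2*b0) with hB0|hB0
  · exact ⟨f1, f2, hf1, hf2, hA1, hB1, Or.inl ⟨hA0, hB0⟩⟩
  · rcases eq_or_lt_of_le hA0 with heq|hpos
    · exact ⟨f1, f2, hf1, hf2, hA1, hB1, Or.inr ⟨heq.symm.le, hB0.le⟩⟩
    · have h0 : f1*a1 = 0 ∨ f2*b1 = 0 := by
        by_contra hc
        push_neg at hc
        have h1 : 1 ≤ f1*a1 := lt_of_le_of_ne hA1 (Ne.symm hc.1)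
        have h2 : 1 ≤ f2*b1 := lt_of_le_of_ne hB1 (Ne.symm hc.2)
        rcases hD with h|h <;> nlinarith
      rcases h0 with h0|h0
      · refine ⟨-f1, f2, ?_, hf2, ?_, hB1, Or.inr ⟨?_, hB0.le⟩⟩
        · rcases hf1 with rfl|rfl <;> simp
        · simp only [neg_mul]; linarith
        · simp only [neg_mul]; linarith
      · refine ⟨f1, -f2, hf1, ?_, hA1, ?_, Or.inl ⟨hA0, ?_⟩⟩
        · rcases hf2 with rfl|rfl <;> simp
        · simp only [neg_mul]; linarith
        · simp only [neg_mul]; linarith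
  · rcases eq_or_lt_of_le hB0 with heq|hpos
    · exact ⟨f1, f2, hf1, hf2, hA1, hB1, Or.inr ⟨hA0.le, heq.symm.le⟩⟩
    · have h0 : f1*a1 = 0 ∨ f2*b1 = 0 := by
        by_contra hc
        push_neg at hc
        have h1 : 1 ≤ f1*a1 := lt_of_le_of_ne hA1 (Ne.symm hc.1)
        have h2 : 1 ≤ f2*b1 := lt_of_le_of_ne hB1 (Ne.symm hc.2)
        rcases hD with h|h <;> nlinarith
      rcases h0 with h0|h0
      · refine ⟨-f1, f2, ?_, hf2, ?_, hB1, Or.inl ⟨?_, hB0⟩⟩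
        · rcases hf1 with rfl|rfl <;> simp
        · simp only [neg_mul]; linarith
        · simp only [neg_mul]; linarith
      · refine ⟨f1, -f2, hf1, ?_, hA1, ?_, Or.inr ⟨hA0.le, ?_⟩⟩
        · rcases hf2 with rfl|rfl <;> simp
        · simp only [neg_mul]; linarith
        · simp only [neg_mul]; linarith
  · exact ⟨f1, f2, hf1, hf2, hA1, hB1, Or.inr ⟨hA0.le, hB0.le⟩⟩

lemma hull_quad (w1 w2 w3 w4 : Fin 2 → ℤ)
    (h1 : 0 ≤ w1 1) (h2 : 0 ≤ w2 1) (h3 : 0 ≤ w3 1) (h4 : 0 ≤ w4 1)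
    (hx : (0 ≤ w1 0 ∧ 0 ≤ w2 0 ∧ 0 ≤ w3 0 ∧ 0 ≤ w4 0) ∨
          (w1 0 ≤ 0 ∧ w2 0 ≤ 0 ∧ w3 0 ≤ 0 ∧ w4 0 ≤ 0)) :
    (∀ p ∈ convexHull ℝ ({zcast w1, zcast w2, zcast w3, zcast w4} : Set (Fin 2 → ℝ)),
        0 ≤ p 0 ∧ 0 ≤ p 1) ∨
    (∀ p ∈ convexHull ℝ ({zcast w1, zcast w2, zcast w3, zcast w4} : Set (Fin 2 → ℝ)),
        p 0 ≤ 0 ∧ 0 ≤ p 1) := by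
  rcases hx with ⟨hx1, hx2, hx3, hx4⟩|⟨hx1, hx2, hx3, hx4⟩
  · left
    intro p hp
    have hC : Convex ℝ {p : Fin 2 → ℝ | 0 ≤ p 0 ∧ 0 ≤ p 1} := by
      intro x hx' y hy' a b ha hb hab
      refine ⟨?_, ?_⟩ <;> simp only [Pi.add_apply, Pi.smul_apply, smul_eq_mul]
      · exact add_nonneg (mul_nonneg ha hx'.1) (mul_nonneg hb hy'.1)
      · exact add_nonneg (mul_nonneg ha hx'.2) (mul_nonneg hb hy'.2)
    have hsub : ({zcast w1, zcast w2, zcast w3, zcast w4} : Set (Fin 2 → ℝ)) ⊆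
        {p : Fin 2 → ℝ | 0 ≤ p 0 ∧ 0 ≤ p 1} := by
      intro q hq
      simp only [Set.mem_insert_iff, Set.mem_singleton_iff] at hq
      rcases hq with rfl|rfl|rfl|rfl
      · exact ⟨by simp only [zcast]; exact_mod_cast hx1, by simp only [zcast]; exact_mod_cast h1⟩
      · exact ⟨by simp only [zcast]; exact_mod_cast hx2, by simp only [zcast]; exact_mod_cast h2⟩
      · exact ⟨by simp only [zcast]; exact_mod_cast hx3, by simp only [zcast]; exact_mod_cast h3⟩
      · exact ⟨by simp only [zcast]; exact_mod_cast hx4, by simp only [zcast]; exact_mod_cast h4⟩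
    exact convexHull_min hsub hC hp
  · right
    intro p hp
    have hC : Convex ℝ {p : Fin 2 → ℝ | p 0 ≤ 0 ∧ 0 ≤ p 1} := by
      intro x hx' y hy' a b ha hb hab
      refine ⟨?_, ?_⟩ <;> simp only [Pi.add_apply, Pi.smul_apply, smul_eq_mul]
      · nlinarith [hx'.1, hy'.1]
      · exact add_nonneg (mul_nonneg ha hx'.2) (mul_nonneg hb hy'.2)
    have hsub : ({zcast w1, zcast w2, zcast w3, zcast w4} : Set (Fin 2 → ℝ)) ⊆
        {p : Fin 2 → ℝ | p 0 ≤ 0 ∧ 0 ≤ p 1} := by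
      intro q hq
      simp only [Set.mem_insert_iff, Set.mem_singleton_iff] at hq
      rcases hq with rfl|rfl|rfl|rfl
      · exact ⟨by simp only [zcast]; exact_mod_cast hx1, by simp only [zcast]; exact_mod_cast h1⟩
      · exact ⟨by simp only [zcast]; exact_mod_cast hx2, by simp only [zcast]; exact_mod_cast h2⟩
      · exact ⟨by simp only [zcast]; exact_mod_cast hx3, by simp only [zcast]; exact_mod_cast h3⟩
      · exact ⟨by simp only [zcast]; exact_mod_cast hx4, by simp only [zcast]; exact_mod_cast h4⟩
    exact convexHull_min hsub hC hp

theorem parallelogram_translate_quadrant (u1 u2 v : Fin 2 → ℤ)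
    (hdet : u1 0 * u2 1 - u1 1 * u2 0 = 1 ∨ u1 0 * u2 1 - u1 1 * u2 0 = -1) :
    ∃ t : Fin 2 → ℤ,
      ((v + t = 0 ∨ v + t + u1 = 0 ∨ v + t + u2 = 0 ∨ v + t + u1 + u2 = 0) ∧
       ((∀ p ∈ convexHull ℝ ({zcast (v + t), zcast (v + t + u1), zcast (v + t + u2),
            zcast (v + t + u1 + u2)} : Set (Fin 2 → ℝ)), 0 ≤ p 0 ∧ 0 ≤ p 1) ∨
        (∀ p ∈ convexHull ℝ ({zcast (v + t), zcast (v + t + u1), zcast (v + t + u2),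
            zcast (v + t + u1 + u2)} : Set (Fin 2 → ℝ)), p 0 ≤ 0 ∧ 0 ≤ p 1))) := by
  obtain ⟨e1, e2, he1, he2, hA1, hB1, hx⟩ := signs_choice (u1 0) (u1 1) (u2 0) (u2 1) hdet
  rcases he1 with rfl|rfl <;> rcases he2 with rfl|rfl
  · refine ⟨-v, Or.inl (by abel), hull_quad _ _ _ _ ?_ ?_ ?_ ?_ ?_⟩ <;>
      simp only [Pi.add_apply, Pi.neg_apply, Pi.sub_apply] <;> omega
  · refine ⟨-v - u2, Or.inr (Or.inr (Or.inl (by abel))), hull_quad _ _ _ _ ?_ ?_ ?_ ?_ ?_⟩ <;>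
      simp only [Pi.add_apply, Pi.neg_apply, Pi.sub_apply] <;> omega
  · refine ⟨-v - u1, Or.inr (Or.inl (by abel)), hull_quad _ _ _ _ ?_ ?_ ?_ ?_ ?_⟩ <;>
      simp only [Pi.add_apply, Pi.neg_apply, Pi.sub_apply] <;> omega
  · refine ⟨-v - u1 - u2, Or.inr (Or.inr (Or.inr (by abel))), hull_quad _ _ _ _ ?_ ?_ ?_ ?_ ?_⟩ <;>
      simp only [Pi.add_apply, Pi.neg_apply, Pi.sub_apply] <;> omega
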